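/- Let A be an integral, local, noetherian algebra over an algebraically closed field k of characteristic p > 0, with residue field k and maximal ideal 𝔪. Then the intersection over all n of the images of the n-th power Frobenius, i.e. { a ∈ A : for every n there exists a_n ∈ A with a = a_n^{p^n} }, equals k. -/

import Mathlib

/-- Lemma 28.06.2016--1 (first part): for an integral, local, noetherian `k`-algebra `A`
with residue field `k`, where `k` is algebraically closed of characteristic `p > 0`,
the set `{a ∈ A : ∀ n, ∃ aₙ, a = aₙ^(p^n)}` equals (the image of) `k`. -/
theorem stmt_2 (p : ℕ) [Fact p.Prime] (k : Type*) [Field k] [IsAlgClosed k] [CharP k p]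
    (A : Type*) [CommRing A] [IsDomain A] [IsLocalRing A] [IsNoetherianRing A]
    [Algebra k A] (hres : Function.Bijective
      ((IsLocalRing.residue A).comp (algebraMap k A))) (a : A) :
    (∀ n : ℕ, ∃ b : A, b ^ p ^ n = a) ↔ ∃ c : k, algebraMap k A c = a := by
  have hp : p.Prime := Fact.out
  have hinj : Function.Injective (algebraMap k A) := (algebraMap k A).injective
  haveI : CharP A p := charP_of_injective_algebraMap hinj p
  constructor
  · intro h
    -- choose c with residue (alg c) = residue a
    obtain ⟨c, hc⟩ := hres.2 (IsLocalRing.residue A a)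
    refine ⟨c, ?_⟩
    have key : algebraMap k A c - a ∈ ⨅ n : ℕ, (IsLocalRing.maximalIdeal A) ^ n := by
      rw [Ideal.mem_iInf]
      intro m
      obtain ⟨b, hb⟩ := h m
      obtain ⟨d, hd⟩ := hres.2 (IsLocalRing.residue A b)
      have hdm : b - algebraMap k A d ∈ IsLocalRing.maximalIdeal A := by
        rw [← IsLocalRing.residue_eq_zero_iff]
        simp only [RingHom.comp_apply] at hd
        rw [map_sub, ← hd, sub_self]
      have hdc : d ^ p ^ m = c := by
        apply hres.1
        simp only [RingHom.comp_apply, map_pow] at hd hc ⊢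
        rw [hd, ← map_pow, hb, hc]
      have : algebraMap k A c - a = (algebraMap k A d - b) ^ p ^ m := by
        rw [sub_pow_char_pow, ← map_pow, hdc, hb]
      rw [this]
      have hmem : (algebraMap k A d - b) ^ p ^ m ∈ (IsLocalRing.maximalIdeal A) ^ (p ^ m) := by
        apply Ideal.pow_mem_pow
        rw [← neg_sub]
        exact (IsLocalRing.maximalIdeal A).neg_mem hdm
      refine Ideal.pow_le_pow_right ?_ hmem
      calc m ≤ p ^ m := Nat.le_of_lt (Nat.lt_pow_self hp.one_lt)
      _ = p ^ m := rfl
    rw [Ideal.iInf_pow_eq_bot_of_isLocalRing _ (IsLocalRing.maximalIdeal.isMaximal A).ne_top,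
      Ideal.mem_bot, sub_eq_zero] at key
    exact key
  · rintro ⟨c, rfl⟩ n
    obtain ⟨d, hd⟩ := IsAlgClosed.exists_pow_nat_eq c (pow_pos hp.pos n)
    exact ⟨algebraMap k A d, by rw [← map_pow, hd]⟩
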